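/- For every integer n ≥ 8 there exist triangulations S and T of size n such that every geodesic S = S_0, S_1, …, S_k = T from S to T in the associahedron graph satisfies conflicts(S_1, T) > conflicts(S_0, T); that is, every geodesic from S to T begins with an edge flip that strictly increases the number of conflicts with T. -/

import Mathlib

/-- Two chords `e = {e.1, e.2}` and `f = {f.1, f.2}` (each written with first
coordinate smaller) of a convex polygon cross. -/
def Crosses (e f : ℕ × ℕ) : Prop :=
  (e.1 < f.1 ∧ f.1 < e.2 ∧ e.2 < f.2) ∨ (f.1 < e.1 ∧ e.1 < f.2 ∧ f.2 < e.2)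

instance (e f : ℕ × ℕ) : Decidable (Crosses e f) := by
  unfold Crosses; exact inferInstance

/-- `e` is a diagonal of the convex `(n+2)`-gon with vertices `0, 1, …, n+1`
(in order), i.e. a chord joining two non-adjacent vertices, recorded with
smaller endpoint first. -/
def IsDiagonal (n : ℕ) (e : ℕ × ℕ) : Prop :=
  e.1 < e.2 ∧ e.2 ≤ n + 1 ∧ e.1 + 1 < e.2 ∧ ¬(e.1 = 0 ∧ e.2 = n + 1)

/-- A triangulation of size `n`: a set of `n - 1` pairwise non-crossing
diagonals of the `(n+2)`-gon (dividing it into `n` triangles). -/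
def IsTriangulation (n : ℕ) (S : Finset (ℕ × ℕ)) : Prop :=
  S.card = n - 1 ∧ (∀ e ∈ S, IsDiagonal n e) ∧ ∀ e ∈ S, ∀ f ∈ S, ¬ Crosses e f

/-- The number of conflicts between `S` and `T`: the number of pairs
`(s, t)` with `s ∈ S`, `t ∈ T` such that `s` and `t` cross. -/
def conflicts (S T : Finset (ℕ × ℕ)) : ℕ :=
  ((S ×ˢ T).filter fun p => Crosses p.1 p.2).card

/-- `S` and `T` are triangulations of size `n` differing by a single edge
flip: exactly one diagonal of `S` is replaced by one other diagonal. -/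
def FlipAdj (n : ℕ) (S T : Finset (ℕ × ℕ)) : Prop :=
  IsTriangulation n S ∧ IsTriangulation n T ∧ (S \ T).card = 1 ∧ (T \ S).card = 1

/-- `f 0, f 1, …, f k` is a path `S = f 0, …, f k = T` in the associahedron
graph of size `n` (consecutive triangulations differ by an edge flip). -/
def IsFlipPath (n k : ℕ) (f : ℕ → Finset (ℕ × ℕ)) (S T : Finset (ℕ × ℕ)) : Prop :=
  f 0 = S ∧ f k = T ∧ ∀ i < k, FlipAdj n (f i) (f (i + 1))

/-- The flip distance `d(S,T)`: the least length of a path from `S` to `T`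
in the associahedron graph of size `n`. -/
noncomputable def flipDist (n : ℕ) (S T : Finset (ℕ × ℕ)) : ℕ :=
  sInf {k | ∃ f, IsFlipPath n k f S T}

/-- A geodesic from `S` to `T`: a path in the associahedron graph whose
length `k` equals the distance `d(S,T)`. -/
def IsGeodesic (n k : ℕ) (f : ℕ → Finset (ℕ × ℕ)) (S T : Finset (ℕ × ℕ)) : Prop :=
  IsFlipPath n k f S T ∧ k = flipDist n S T

/-- An edge `e ∈ S`, `e ∉ T` is one-off with respect to `T` if flipping `e`
in `S` directly produces an edge of `T \ S`. -/
def OneOff (n : ℕ) (S T : Finset (ℕ × ℕ)) (e : ℕ × ℕ) : Prop :=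
  e ∈ S ∧ e ∉ T ∧ ∃ e' ∈ T, e' ∉ S ∧ IsTriangulation n (insert e' (S.erase e))

namespace Assoc

/-! ### Fixed data -/

def S8 : Finset (ℕ × ℕ) := {(1,3),(1,4),(1,5),(1,7),(1,8),(1,9),(5,7)}
def T8 : Finset (ℕ × ℕ) := {(0,2),(0,3),(0,4),(0,5),(0,6),(6,8),(6,9)}

def Blist : List (Finset (ℕ × ℕ)) :=
  [S8,
   {(1,4),(1,5),(1,7),(1,8),(1,9),(2,4),(5,7)},
   {(1,3),(1,4),(1,5),(1,7),(1,9),(5,7),(7,9)},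
   {(1,3),(1,5),(1,7),(1,8),(1,9),(3,5),(5,7)},
   {(1,3),(1,4),(1,5),(1,8),(1,9),(5,7),(5,8)},
   {(0,8),(1,3),(1,4),(1,5),(1,7),(1,8),(5,7)},
   {(1,3),(1,4),(1,5),(1,8),(1,9),(5,8),(6,8)}]

def D10 : Finset (ℕ × ℕ) :=
  (Finset.range 10 ×ˢ Finset.range 10).filter fun p => p.1 + 1 < p.2 ∧ ¬(p.1 = 0 ∧ p.2 = 9)

def cf (T : Finset (ℕ × ℕ)) (x : ℕ × ℕ) : ℕ := (T.filter fun t => Crosses x t).card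

/-! ### Decidable facts -/

lemma fact_two_cross : ∀ t ∈ T8, ∃ a ∈ S8, ∃ b ∈ S8, a ≠ b ∧ Crosses a t ∧ Crosses b t := by
  decide

lemma fact_closure : ∀ U ∈ Blist, ∀ x ∈ T8, x ∉ U → ∀ y ∈ U, y ∉ T8 →
    ((∀ a ∈ insert x (U.erase y), ∀ b ∈ insert x (U.erase y), ¬ Crosses a b) →
      insert x (U.erase y) ∈ Blist) := by
  decide

lemma fact_dichotomy : ∀ e ∈ S8, ∀ p ∈ D10, p ∉ S8 →
    (∀ s ∈ S8.erase e, ¬ Crosses p s) →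
    (cf T8 e < cf T8 p ∨ insert p (S8.erase e) ∈ Blist) := by
  decide

lemma fact_B_ne_T8 : ∀ U ∈ Blist, U ≠ T8 := by decide
lemma fact_B_card : ∀ U ∈ Blist, U.card = 7 := by decide
lemma fact_B_region : ∀ U ∈ Blist, ∀ p ∈ U,
    p.1 < p.2 ∧ p.1 + 1 < p.2 ∧ p.2 ≤ 9 ∧ ¬(p.1 = 0 ∧ p.2 = 9) := by decide
lemma fact_S8_region : ∀ p ∈ S8,
    p.1 < p.2 ∧ p.1 + 1 < p.2 ∧ p.2 ≤ 9 ∧ ¬(p.1 = 0 ∧ p.2 = 9) := by decide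
lemma fact_T8_region : ∀ p ∈ T8,
    p.1 < p.2 ∧ p.1 + 1 < p.2 ∧ p.2 ≤ 9 ∧ ¬(p.1 = 0 ∧ p.2 = 9) := by decide
lemma fact_S8_not_T8 : ∀ p ∈ S8, p ∉ T8 := by decide
lemma fact_S8_card : S8.card = 7 := by decide
lemma fact_S8_sdiff : S8 \ T8 = S8 := by decide
lemma fact_T8_sdiff : T8 \ S8 = T8 := by decide
lemma fact_S8_mem_B : S8 ∈ Blist := by decide

lemma mem_D10 {p : ℕ × ℕ} (h1 : p.1 + 1 < p.2) (h2 : p.2 ≤ 9) (h3 : ¬(p.1 = 0 ∧ p.2 = 9)) :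
    p ∈ D10 := by
  simp only [D10, Finset.mem_filter, Finset.mem_product, Finset.mem_range]
  exact ⟨⟨by omega, by omega⟩, h1, h3⟩

/-! ### Region / pad infrastructure -/

def Reg (p : ℕ × ℕ) : Prop := p.2 ≤ 9 ∧ ¬(p.1 = 0 ∧ p.2 = 9)

instance (p : ℕ × ℕ) : Decidable (Reg p) := by unfold Reg; exact inferInstance

def pad (n : ℕ) : Finset (ℕ × ℕ) := (Finset.Icc 9 n).image fun j => (0, j)

lemma mem_pad {n : ℕ} {p : ℕ × ℕ} : p ∈ pad n ↔ 9 ≤ p.2 ∧ p.2 ≤ n ∧ p.1 = 0 := by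
  simp only [pad, Finset.mem_image, Finset.mem_Icc]
  constructor
  · rintro ⟨j, ⟨h1, h2⟩, rfl⟩; exact ⟨h1, h2, rfl⟩
  · rintro ⟨h1, h2, h3⟩; exact ⟨p.2, ⟨h1, h2⟩, by rw [← h3]⟩

lemma pad_not_reg {n : ℕ} {p : ℕ × ℕ} (hp : p ∈ pad n) : ¬ Reg p := by
  rw [mem_pad] at hp; rintro ⟨h1, h2⟩; exact h2 ⟨hp.2.2, le_antisymm h1 hp.1⟩

lemma pad_cross {n : ℕ} {p q : ℕ × ℕ} (hp : p ∈ pad n) (hq : q.2 ≤ 9) :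
    ¬ Crosses p q ∧ ¬ Crosses q p := by
  rw [mem_pad] at hp
  obtain ⟨h9, hn, h0⟩ := hp
  constructor <;> rintro (⟨a, b, c⟩ | ⟨a, b, c⟩) <;> omega

lemma pad_pad_cross {n : ℕ} {p q : ℕ × ℕ} (hp : p ∈ pad n) (hq : q ∈ pad n) :
    ¬ Crosses p q := by
  rw [mem_pad] at hp hq
  rintro (⟨a, b, c⟩ | ⟨a, b, c⟩) <;> omega

lemma pad_card {n : ℕ} (hn : 8 ≤ n) : (pad n).card = n - 8 := by
  rw [pad, Finset.card_image_of_injective _ (fun a b h => by simpa using h)]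
  rw [Nat.card_Icc]; omega

lemma reg_union_sdiff {n : ℕ} {A B : Finset (ℕ × ℕ)} (hA : ∀ p ∈ A, Reg p) :
    (pad n ∪ A) \ (pad n ∪ B) = A \ B := by
  ext p
  simp only [Finset.mem_sdiff, Finset.mem_union, not_or]
  constructor
  · rintro ⟨hp1 | hp1, hp2, hp3⟩
    · exact absurd hp1 hp2
    · exact ⟨hp1, hp3⟩
  · rintro ⟨hp1, hp3⟩
    exact ⟨Or.inr hp1, fun h => pad_not_reg h (hA p hp1), hp3⟩

lemma pad_union_card {n : ℕ} (hn : 8 ≤ n) {A : Finset (ℕ × ℕ)} (hA : ∀ p ∈ A, Reg p)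
    (hc : A.card = 7) : (pad n ∪ A).card = n - 1 := by
  rw [Finset.card_union_of_disjoint, pad_card hn, hc]
  · omega
  · rw [Finset.disjoint_left]
    exact fun a ha ha' => pad_not_reg ha (hA a ha')

lemma regionTri {n : ℕ} (hn : 8 ≤ n) {A : Finset (ℕ × ℕ)}
    (hd : ∀ p ∈ A, p.1 < p.2 ∧ p.1 + 1 < p.2 ∧ p.2 ≤ 9 ∧ ¬(p.1 = 0 ∧ p.2 = 9))
    (hc : A.card = 7) (hnc : ∀ a ∈ A, ∀ b ∈ A, ¬ Crosses a b) :
    IsTriangulation n (pad n ∪ A) := by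
  have hreg : ∀ p ∈ A, Reg p := fun p hp => ⟨(hd p hp).2.2.1, (hd p hp).2.2.2⟩
  refine ⟨pad_union_card hn hreg hc, ?_, ?_⟩
  · intro e he
    rcases Finset.mem_union.mp he with h | h
    · rw [mem_pad] at h
      exact ⟨by omega, by omega, by omega, by omega⟩
    · obtain ⟨h1, h2, h3, h4⟩ := hd e h
      exact ⟨h1, by omega, h2, by omega⟩
  · intro e he f hf
    rcases Finset.mem_union.mp he with he' | he' <;> rcases Finset.mem_union.mp hf with hf' | hf'
    · exact pad_pad_cross he' hf'
    · exact (pad_cross he' (hd f hf').2.2.1).1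
    · exact (pad_cross hf' (hd e he').2.2.1).2
    · exact hnc e he' f hf'

/-! ### conflicts lemmas -/

lemma conflicts_eq_sum (S T : Finset (ℕ × ℕ)) : conflicts S T = ∑ s ∈ S, cf T s := by
  rw [conflicts]
  rw [Finset.card_eq_sum_card_fiberwise (f := Prod.fst) (t := S)
    (fun x hx => (Finset.mem_product.mp (Finset.mem_filter.mp hx).1).1)]
  refine Finset.sum_congr rfl fun s hs => ?_
  rw [cf]
  apply Finset.card_nbij' (fun p => p.2) (fun t => (s, t))
  · intro p hp
    simp only [Finset.mem_coe, Finset.mem_filter, Finset.mem_product] at hp ⊢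
    obtain ⟨⟨⟨_, h2⟩, h3⟩, h4⟩ := hp
    subst h4; exact ⟨h2, h3⟩
  · intro t ht
    simp only [Finset.mem_coe, Finset.mem_filter, Finset.mem_product] at ht ⊢
    exact ⟨⟨⟨hs, ht.1⟩, ht.2⟩, by trivial⟩
  · intro p hp
    simp only [Finset.mem_coe, Finset.mem_filter] at hp
    rw [← hp.2]
  · intro t _; rfl

lemma conflicts_flip {S T : Finset (ℕ × ℕ)} {e e' : ℕ × ℕ} (he : e ∈ S) (he' : e' ∉ S) :
    conflicts (insert e' (S.erase e)) T + cf T e = conflicts S T + cf T e' := by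
  rw [conflicts_eq_sum, conflicts_eq_sum,
    Finset.sum_insert (fun h => he' (Finset.mem_of_mem_erase h)),
    ← Finset.add_sum_erase _ _ he]
  ring

lemma cf_pad_union {n : ℕ} {x : ℕ × ℕ} (hx : x.2 ≤ 9) (A : Finset (ℕ × ℕ)) :
    cf (pad n ∪ A) x = cf A x := by
  rw [cf, cf, Finset.filter_union]
  have : (pad n).filter (fun t => Crosses x t) = ∅ := by
    rw [Finset.filter_eq_empty_iff]
    exact fun t ht => (pad_cross ht hx).2
  rw [this, Finset.empty_union]

/-! ### path lemmas -/

lemma path_card_le {n : ℕ} : ∀ (k : ℕ) (f : ℕ → Finset (ℕ × ℕ)) (S T : Finset (ℕ × ℕ)),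
    IsFlipPath n k f S T → (S \ T).card ≤ k := by
  intro k
  induction k with
  | zero => rintro f S T ⟨h0, hk, _⟩; rw [← h0, hk]; simp
  | succ k ih =>
    rintro f S T ⟨h0, hk, hadj⟩
    have htail : IsFlipPath n k (fun i => f (i + 1)) (f 1) T :=
      ⟨rfl, hk, fun i hi => hadj (i + 1) (by omega)⟩
    have h1 := ih _ _ _ htail
    have hadj0 := hadj 0 (by omega)
    have hsub : S \ T ⊆ (f 1 \ T) ∪ (S \ f 1) := by
      intro x hx
      rcases Finset.mem_sdiff.mp hx with ⟨hx1, hx2⟩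
      by_cases hxf : x ∈ f 1
      · exact Finset.mem_union_left _ (Finset.mem_sdiff.mpr ⟨hxf, hx2⟩)
      · exact Finset.mem_union_right _ (Finset.mem_sdiff.mpr ⟨hx1, hxf⟩)
    calc (S \ T).card ≤ ((f 1 \ T) ∪ (S \ f 1)).card := Finset.card_le_card hsub
      _ ≤ (f 1 \ T).card + (S \ f 1).card := Finset.card_union_le _ _
      _ ≤ k + 1 := by
          have hc1 : (S \ f 1).card = 1 := by rw [← h0]; exact hadj0.2.2.1
          omega

lemma path_tail {n k : ℕ} {f : ℕ → Finset (ℕ × ℕ)} {S T : Finset (ℕ × ℕ)}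
    (h : IsFlipPath n (k + 1) f S T) : IsFlipPath n k (fun i => f (i + 1)) (f 1) T :=
  ⟨rfl, h.2.1, fun i hi => h.2.2 (i + 1) (by omega)⟩

lemma flip_decomp {n : ℕ} {U W : Finset (ℕ × ℕ)} (h : FlipAdj n U W) :
    ∃ e e', e ∈ U ∧ e ∉ W ∧ e' ∈ W ∧ e' ∉ U ∧ W = insert e' (U.erase e) := by
  obtain ⟨_, _, h1, h2⟩ := h
  obtain ⟨e, he⟩ := Finset.card_eq_one.mp h1
  obtain ⟨e', he'⟩ := Finset.card_eq_one.mp h2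
  have heU : e ∈ U ∧ e ∉ W := by
    have : e ∈ U \ W := he ▸ Finset.mem_singleton_self e
    exact Finset.mem_sdiff.mp this
  have he'W : e' ∈ W ∧ e' ∉ U := by
    have : e' ∈ W \ U := he' ▸ Finset.mem_singleton_self e'
    exact Finset.mem_sdiff.mp this
  refine ⟨e, e', heU.1, heU.2, he'W.1, he'W.2, ?_⟩
  ext x
  simp only [Finset.mem_insert, Finset.mem_erase]
  constructor
  · intro hx
    by_cases hxU : x ∈ U
    · right
      refine ⟨fun hxe => heU.2 (hxe ▸ hx), hxU⟩
    · left
      have : x ∈ W \ U := Finset.mem_sdiff.mpr ⟨hx, hxU⟩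
      rw [he'] at this; exact Finset.mem_singleton.mp this
  · rintro (rfl | ⟨hxe, hxU⟩)
    · exact he'W.1
    · by_contra hxW
      have : x ∈ U \ W := Finset.mem_sdiff.mpr ⟨hxU, hxW⟩
      rw [he] at this
      exact hxe (Finset.mem_singleton.mp this)

/-! ### the triangulations -/

def Sn (n : ℕ) : Finset (ℕ × ℕ) := pad n ∪ S8
def Tn (n : ℕ) : Finset (ℕ × ℕ) := pad n ∪ T8

lemma Sn_tri {n : ℕ} (hn : 8 ≤ n) : IsTriangulation n (Sn n) :=
  regionTri hn fact_S8_region fact_S8_card (by decide)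

lemma Tn_tri {n : ℕ} (hn : 8 ≤ n) : IsTriangulation n (Tn n) :=
  regionTri hn fact_T8_region (by decide) (by decide)

lemma Sn_sdiff_Tn {n : ℕ} : Sn n \ Tn n = S8 := by
  rw [Sn, Tn, reg_union_sdiff (fun p hp => ⟨(fact_S8_region p hp).2.2.1, (fact_S8_region p hp).2.2.2⟩),
    fact_S8_sdiff]

lemma Tn_sdiff_Sn {n : ℕ} : Tn n \ Sn n = T8 := by
  rw [Sn, Tn, reg_union_sdiff (fun p hp => ⟨(fact_T8_region p hp).2.2.1, (fact_T8_region p hp).2.2.2⟩),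
    fact_T8_sdiff]

/-! ### the blocking lemma -/

lemma blocked {n : ℕ} (hn : 8 ≤ n) :
    ∀ (m : ℕ) (U : Finset (ℕ × ℕ)), U ∈ Blist → (U \ T8).card = m →
      ∀ g, IsFlipPath n m g (pad n ∪ U) (Tn n) → False := by
  intro m
  induction m with
  | zero =>
    intro U hU hcard g _
    have hsub : U ⊆ T8 := by
      intro x hx
      by_contra hxT
      have : x ∈ U \ T8 := Finset.mem_sdiff.mpr ⟨hx, hxT⟩
      rw [Finset.card_eq_zero.mp hcard] at this
      exact absurd this (Finset.notMem_empty x)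
    have : U = T8 := Finset.eq_of_subset_of_card_le hsub (by rw [fact_B_card U hU]; decide)
    exact fact_B_ne_T8 U hU this
  | succ m ih =>
    intro U hU hcard g hpath
    have hreg : ∀ p ∈ U, Reg p := fun p hp =>
      ⟨(fact_B_region U hU p hp).2.2.1, (fact_B_region U hU p hp).2.2.2⟩
    set V := pad n ∪ U with hV
    have hadj0 : FlipAdj n V (g 1) := by
      have := hpath.2.2 0 (by omega)
      rwa [hpath.1] at this
    obtain ⟨e, e', heV, heW, he'W, he'V, hW⟩ := flip_decomp hadj0
    have htail := path_tail hpath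
    have hle : (g 1 \ Tn n).card ≤ m := path_card_le m _ _ _ htail
    have hVT : V \ Tn n = U \ T8 := by
      rw [hV, Tn, reg_union_sdiff hreg]
    -- the erased edge is in U \ T8
    have hsub1 : (V \ Tn n).erase e ⊆ g 1 \ Tn n := by
      intro x hx
      obtain ⟨hxe, hx1⟩ := Finset.mem_erase.mp hx
      obtain ⟨hxV, hxT⟩ := Finset.mem_sdiff.mp hx1
      refine Finset.mem_sdiff.mpr ⟨?_, hxT⟩
      rw [hW]
      exact Finset.mem_insert_of_mem (Finset.mem_erase.mpr ⟨hxe, hxV⟩)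
    have heUT : e ∈ U \ T8 := by
      by_contra h
      have : (V \ Tn n).erase e = V \ Tn n := by
        apply Finset.erase_eq_of_notMem
        rw [hVT]; exact h
      have h7 := Finset.card_le_card hsub1
      rw [this, hVT, hcard] at h7
      omega
    have he'T : e' ∈ Tn n := by
      by_contra h
      have hsub2 : insert e' ((V \ Tn n).erase e) ⊆ g 1 \ Tn n := by
        intro x hx
        rcases Finset.mem_insert.mp hx with rfl | hx'
        · exact Finset.mem_sdiff.mpr ⟨he'W, h⟩
        · exact hsub1 hx'
      have h7 := Finset.card_le_card hsub2
      rw [Finset.card_insert_of_notMem (fun hc => he'V (Finset.mem_sdiff.mp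
        (Finset.mem_of_mem_erase hc)).1)] at h7
      rw [Finset.card_erase_of_mem (by rw [hVT]; exact heUT), hVT, hcard] at h7
      omega
    have he'T8 : e' ∈ T8 := by
      rcases Finset.mem_union.mp ((by rw [Tn] at he'T; exact he'T) : e' ∈ pad n ∪ T8) with h | h
      · exact absurd (Finset.mem_union_left _ h : e' ∈ V) he'V
      · exact h
    have he'U : e' ∉ U := fun h => he'V (Finset.mem_union_right _ h)
    have heU : e ∈ U := (Finset.mem_sdiff.mp heUT).1
    have heT8 : e ∉ T8 := (Finset.mem_sdiff.mp heUT).2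
    have hepad : e ∉ pad n := fun h => pad_not_reg h (hreg e heU)
    -- g 1 = pad ∪ A1
    set A1 := insert e' (U.erase e) with hA1
    have hg1 : g 1 = pad n ∪ A1 := by
      rw [hW, hV, Finset.erase_union_distrib, Finset.erase_eq_of_notMem hepad,
        Finset.union_insert]
    -- A1 is noncrossing
    have hnc : ∀ a ∈ A1, ∀ b ∈ A1, ¬ Crosses a b := by
      intro a ha b hb
      have htr := hadj0.2.1
      exact htr.2.2 a (by rw [hW, hV] at *; rw [hg1]; exact Finset.mem_union_right _ ha)
        b (by rw [hg1]; exact Finset.mem_union_right _ hb)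
    have hA1B : A1 ∈ Blist := fact_closure U hU e' he'T8 he'U e heU heT8 hnc
    have hA1card : (A1 \ T8).card = m := by
      have : A1 \ T8 = (U \ T8).erase e := by
        ext x
        simp only [hA1, Finset.mem_sdiff, Finset.mem_insert, Finset.mem_erase]
        constructor
        · rintro ⟨rfl | ⟨hx1, hx2⟩, hx3⟩
          · exact absurd he'T8 hx3
          · exact ⟨hx1, hx2, hx3⟩
        · rintro ⟨hx1, hx2, hx3⟩
          exact ⟨Or.inr ⟨hx1, hx2⟩, hx3⟩
      rw [this, Finset.card_erase_of_mem heUT, hcard]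
      omega
    exact ih A1 hA1B hA1card _ (by rw [← hg1]; exact htail)

end Assoc

namespace Assoc

/-! ### explicit geodesic: upper bound -/

def Rp : ℕ → Finset (ℕ × ℕ)
  | 0 => S8
  | 1 => {(1,3),(1,4),(1,5),(1,6),(1,7),(1,8),(1,9)}
  | 2 => {(1,3),(1,4),(1,5),(1,6),(1,8),(1,9),(6,8)}
  | 3 => {(1,3),(1,4),(1,5),(1,6),(1,9),(6,8),(6,9)}
  | 4 => {(0,6),(1,3),(1,4),(1,5),(1,6),(6,8),(6,9)}
  | 5 => {(0,5),(0,6),(1,3),(1,4),(1,5),(6,8),(6,9)}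
  | 6 => {(0,4),(0,5),(0,6),(1,3),(1,4),(6,8),(6,9)}
  | 7 => {(0,3),(0,4),(0,5),(0,6),(1,3),(6,8),(6,9)}
  | _ + 8 => T8

lemma stepAdj {n : ℕ} (hn : 8 ≤ n) {A B : Finset (ℕ × ℕ)}
    (hdA : ∀ p ∈ A, p.1 < p.2 ∧ p.1 + 1 < p.2 ∧ p.2 ≤ 9 ∧ ¬(p.1 = 0 ∧ p.2 = 9))
    (hcA : A.card = 7) (hncA : ∀ a ∈ A, ∀ b ∈ A, ¬ Crosses a b)
    (hdB : ∀ p ∈ B, p.1 < p.2 ∧ p.1 + 1 < p.2 ∧ p.2 ≤ 9 ∧ ¬(p.1 = 0 ∧ p.2 = 9))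
    (hcB : B.card = 7) (hncB : ∀ a ∈ B, ∀ b ∈ B, ¬ Crosses a b)
    (h1 : (A \ B).card = 1) (h2 : (B \ A).card = 1) :
    FlipAdj n (pad n ∪ A) (pad n ∪ B) := by
  refine ⟨regionTri hn hdA hcA hncA, regionTri hn hdB hcB hncB, ?_, ?_⟩
  · rw [reg_union_sdiff (fun p hp => ⟨(hdA p hp).2.2.1, (hdA p hp).2.2.2⟩)]; exact h1
  · rw [reg_union_sdiff (fun p hp => ⟨(hdB p hp).2.2.1, (hdB p hp).2.2.2⟩)]; exact h2

lemma upper_path {n : ℕ} (hn : 8 ≤ n) :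
    IsFlipPath n 8 (fun i => pad n ∪ Rp i) (Sn n) (Tn n) := by
  refine ⟨rfl, rfl, ?_⟩
  intro i hi
  interval_cases i <;> exact stepAdj hn (by decide) (by decide) (by decide)
    (by decide) (by decide) (by decide) (by decide) (by decide)

lemma lower_bound {n : ℕ} (hn : 8 ≤ n) {k : ℕ} {g : ℕ → Finset (ℕ × ℕ)}
    (h : IsFlipPath n k g (Sn n) (Tn n)) : 8 ≤ k := by
  have h7 : (Sn n \ Tn n).card ≤ k := path_card_le k _ _ _ h
  rw [Sn_sdiff_Tn, fact_S8_card] at h7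
  rcases eq_or_lt_of_le h7 with h7' | h7'
  · exfalso
    exact blocked hn 7 S8 fact_S8_mem_B (by rw [fact_S8_sdiff]; exact fact_S8_card) g
      (by rw [← h7'] at h; exact h)
  · omega

lemma flipDist_eq {n : ℕ} (hn : 8 ≤ n) : flipDist n (Sn n) (Tn n) = 8 := by
  apply le_antisymm
  · exact Nat.sInf_le ⟨_, upper_path hn⟩
  · exact le_csInf ⟨8, _, upper_path hn⟩ fun k hk => by
      obtain ⟨g, hg⟩ := hk
      exact lower_bound hn hg

end Assoc

open Assoc

/-- For every `n ≥ 8` there are triangulations `S`, `T` of size `n` such that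
every geodesic from `S` to `T` begins with a flip strictly increasing the
number of conflicts with `T`. -/
theorem stmt0 :
    ∀ n : ℕ, 8 ≤ n → ∃ S T : Finset (ℕ × ℕ),
      IsTriangulation n S ∧ IsTriangulation n T ∧
      ∀ (k : ℕ) (f : ℕ → Finset (ℕ × ℕ)), IsGeodesic n k f S T →
        conflicts S T < conflicts (f 1) T := by
  intro n hn
  refine ⟨Sn n, Tn n, Sn_tri hn, Tn_tri hn, ?_⟩
  intro k f hgeo
  obtain ⟨hpath, hkd⟩ := hgeo
  rw [flipDist_eq hn] at hkd
  subst hkd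
  obtain ⟨h0, hk, hadj⟩ := hpath
  have hadj0 : FlipAdj n (Sn n) (f 1) := by
    have := hadj 0 (by omega)
    rwa [h0] at this
  obtain ⟨e, e', heS, heF, he'F, he'S, hF⟩ := flip_decomp hadj0
  have htri1 : IsTriangulation n (f 1) := hadj0.2.1
  have hnc1 := htri1.2.2
  have htail : IsFlipPath n 7 (fun i => f (i + 1)) (f 1) (Tn n) :=
    path_tail (show IsFlipPath n (7 + 1) f (Sn n) (Tn n) from ⟨h0, hk, hadj⟩)
  have hle : (f 1 \ Tn n).card ≤ 7 := path_card_le 7 _ _ _ htail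
  by_cases he'T : e' ∈ Tn n
  · -- the inserted edge is an edge of T: it crosses two edges of S8, one of which survives
    exfalso
    have he'T8 : e' ∈ T8 := by
      rcases Finset.mem_union.mp he'T with h | h
      · exact absurd (Finset.mem_union_left _ h : e' ∈ Sn n) he'S
      · exact h
    obtain ⟨a, haS8, b, hbS8, hab, hca, hcb⟩ := fact_two_cross e' he'T8
    have hex : ∃ s ∈ S8, s ≠ e ∧ Crosses s e' := by
      by_cases hae : a = e
      · exact ⟨b, hbS8, fun h => hab (by rw [hae, h]), hcb⟩
      · exact ⟨a, haS8, hae, hca⟩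
    obtain ⟨s, hsS8, hse, hcs⟩ := hex
    have hsF : s ∈ f 1 := by
      rw [hF]
      exact Finset.mem_insert_of_mem (Finset.mem_erase.mpr
        ⟨hse, Finset.mem_union_right _ hsS8⟩)
    exact hnc1 s hsF e' he'F hcs
  · rcases Finset.mem_union.mp heS with hepad | heS8
    · -- erasing a pad edge: |f 1 \ T| would be 8 > 7
      exfalso
      have hbig : insert e' S8 ⊆ f 1 \ Tn n := by
        intro x hx
        rcases Finset.mem_insert.mp hx with rfl | hxS8
        · exact Finset.mem_sdiff.mpr ⟨he'F, he'T⟩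
        · refine Finset.mem_sdiff.mpr ⟨?_, ?_⟩
          · rw [hF]
            refine Finset.mem_insert_of_mem (Finset.mem_erase.mpr ⟨?_, Finset.mem_union_right _ hxS8⟩)
            intro h
            exact pad_not_reg hepad (h ▸ ⟨(fact_S8_region x hxS8).2.2.1, (fact_S8_region x hxS8).2.2.2⟩)
          · intro hxT
            rcases Finset.mem_union.mp hxT with h | h
            · exact pad_not_reg h ⟨(fact_S8_region x hxS8).2.2.1, (fact_S8_region x hxS8).2.2.2⟩
            · exact fact_S8_not_T8 x hxS8 h
      have h8 : (insert e' S8).card = 8 := by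
        rw [Finset.card_insert_of_notMem (fun h => he'S (Finset.mem_union_right _ h)), fact_S8_card]
      have := Finset.card_le_card hbig
      omega
    · -- erasing a region edge
      have hereg : Reg e := ⟨(fact_S8_region e heS8).2.2.1, (fact_S8_region e heS8).2.2.2⟩
      have hepad : e ∉ pad n := fun h => pad_not_reg h hereg
      have hdiag : IsDiagonal n e' := htri1.2.1 e' he'F
      have hpadF : ∀ q ∈ pad n, q ∈ f 1 := by
        intro q hq
        rw [hF]
        refine Finset.mem_insert_of_mem (Finset.mem_erase.mpr
          ⟨fun h => pad_not_reg hq (h ▸ hereg), Finset.mem_union_left _ hq⟩)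
      have he'2 : e'.2 ≤ 9 := by
        by_contra hgt
        push_neg at hgt
        by_cases h0' : e'.1 = 0
        · by_cases hn1 : e'.2 = n + 1
          · exact hdiag.2.2.2 ⟨h0', hn1⟩
          · have : e' ∈ pad n := mem_pad.mpr ⟨by omega, by have := hdiag.2.1; omega, h0'⟩
            exact he'S (Finset.mem_union_left _ this)
        · have hq : (0, e'.2 - 1) ∈ pad n := mem_pad.mpr ⟨by simp; omega,
            by have := hdiag.2.1; simp; omega, rfl⟩
          have hcross : Crosses (0, e'.2 - 1) e' := by
            left
            refine ⟨by simpa using Nat.pos_of_ne_zero h0', ?_, ?_⟩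
            · have := hdiag.2.2.1; simp; omega
            · simp; omega
          exact hnc1 _ (hpadF _ hq) e' he'F hcross
      have he'9 : ¬(e'.1 = 0 ∧ e'.2 = 9) := by
        rintro ⟨ha, hb⟩
        rcases eq_or_lt_of_le hn with hn8 | hn9
        · exact hdiag.2.2.2 ⟨ha, by omega⟩
        · have : e' ∈ pad n := mem_pad.mpr ⟨by omega, by omega, ha⟩
          exact he'S (Finset.mem_union_left _ this)
      have hD : e' ∈ D10 := mem_D10 hdiag.2.2.1 he'2 he'9
      have he'S8 : e' ∉ S8 := fun h => he'S (Finset.mem_union_right _ h)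
      have hncs : ∀ s ∈ S8.erase e, ¬ Crosses e' s := by
        intro s hs
        obtain ⟨hse, hsS8⟩ := Finset.mem_erase.mp hs
        refine hnc1 e' he'F s ?_
        rw [hF]
        exact Finset.mem_insert_of_mem (Finset.mem_erase.mpr
          ⟨hse, Finset.mem_union_right _ hsS8⟩)
      rcases fact_dichotomy e heS8 e' hD he'S8 hncs with hlt | hB
      · -- conflicts strictly increase
        rw [hF]
        have key := conflicts_flip (T := Tn n) heS he'S
        have ce : cf (Tn n) e = cf T8 e := cf_pad_union (fact_S8_region e heS8).2.2.1 _
        have ce' : cf (Tn n) e' = cf T8 e' := cf_pad_union he'2 _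
        omega
      · -- blocked
        exfalso
        have he'T8 : e' ∉ T8 := fun h => he'T (Finset.mem_union_right _ h)
        have hf1 : f 1 = pad n ∪ insert e' (S8.erase e) := by
          rw [hF]
          show insert e' ((pad n ∪ S8).erase e) = _
          rw [Finset.erase_union_distrib, Finset.erase_eq_of_notMem hepad,
            Finset.union_insert]
        have hA1card : (insert e' (S8.erase e) \ T8).card = 7 := by
          have heq : insert e' (S8.erase e) \ T8 = insert e' (S8.erase e) := by
            ext x
            simp only [Finset.mem_sdiff, Finset.mem_insert, Finset.mem_erase]
            constructor
            · exact fun h => h.1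
            · rintro (rfl | ⟨hx1, hx2⟩)
              · exact ⟨Or.inl rfl, he'T8⟩
              · exact ⟨Or.inr ⟨hx1, hx2⟩, fact_S8_not_T8 x hx2⟩
          rw [heq, Finset.card_insert_of_notMem
            (fun h => he'S8 (Finset.mem_of_mem_erase h)),
            Finset.card_erase_of_mem heS8, fact_S8_card]
        exact blocked hn 7 _ hB hA1card _ (by rw [← hf1]; exact htail)
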